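/- Let F⊂ℝ be compact with Lebesgue measure zero, fractal string (l_j), and D∈(0,1). If 0 < 𝓢̲^D(F) ≤ 𝓢̄^D(F) < ∞, then l_j ≍ j^{−1/D} as j→∞, i.e. 0 < liminf_j l_j j^{1/D} ≤ limsup_j l_j j^{1/D} < ∞. -/

import Mathlib

open Filter Set Topology MeasureTheory Metric ENNReal

/-- `κ_t = π^{t/2} / Γ(1 + t/2)`. -/
noncomputable def kappa (t : ℝ) : ℝ := Real.pi ^ (t / 2) / Real.Gamma (1 + t / 2)

/-- `(l_j)` is the fractal string of the compact set `F ⊂ ℝ`: a non-increasing sequence of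
positive lengths of the (pairwise disjoint) bounded complementary open intervals of `F`. -/
def IsFractalString (F : Set ℝ) (l : ℕ → ℝ) : Prop :=
  Antitone l ∧ (∀ j, 0 < l j) ∧
  ∃ a b : ℕ → ℝ,
    Pairwise (Function.onFun Disjoint fun j => Set.Ioo (a j) (b j)) ∧
    (∀ j, a j < b j ∧ b j - a j = l j) ∧
    (convexHull ℝ F) \ F = ⋃ j, Set.Ioo (a j) (b j)

/-- Lower S-content of `F ⊂ ℝ`: `liminf_{r→0} 𝓗⁰(∂F_r)/((1−D)κ_{1−D} r^{−D})`. -/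
noncomputable def lowerSContent (F : Set ℝ) (D : ℝ) : ℝ≥0∞ :=
  Filter.liminf
    (fun r : ℝ => μH[(0 : ℝ)] (frontier (cthickening r F)) /
      ENNReal.ofReal ((1 - D) * kappa (1 - D) * r ^ (-D)))
    (𝓝[>] (0 : ℝ))

/-- Upper S-content of `F ⊂ ℝ`. -/
noncomputable def upperSContent (F : Set ℝ) (D : ℝ) : ℝ≥0∞ :=
  Filter.limsup
    (fun r : ℝ => μH[(0 : ℝ)] (frontier (cthickening r F)) /
      ENNReal.ofReal ((1 - D) * kappa (1 - D) * r ^ (-D)))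
    (𝓝[>] (0 : ℝ))

section
variable {F : Set ℝ} {l a b : ℕ → ℝ}
  (hab : ∀ j, a j < b j ∧ b j - a j = l j)
  (hdis : Pairwise (Function.onFun Disjoint fun j => Set.Ioo (a j) (b j)))
  (hset : (convexHull ℝ F) \ F = ⋃ j, Set.Ioo (a j) (b j))

include hab hset in
lemma F_nonempty : F.Nonempty := by
  have h0 : Set.Ioo (a 0) (b 0) ⊆ convexHull ℝ F \ F :=
    hset ▸ Set.subset_iUnion (fun i => Set.Ioo (a i) (b i)) 0
  have : (convexHull ℝ F).Nonempty :=
    ⟨(a 0 + b 0)/2, (h0 ⟨by linarith [(hab 0).1], by linarith [(hab 0).1]⟩).1⟩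
  rwa [convexHull_nonempty_iff] at this

lemma convF_eq (hF : IsCompact F) (hne : F.Nonempty) :
    convexHull ℝ F = Set.Icc (sInf F) (sSup F) := by
  apply le_antisymm
  · exact convexHull_min (fun x hx => ⟨csInf_le hF.bddBelow hx, le_csSup hF.bddAbove hx⟩)
      (convex_Icc _ _)
  · rw [← segment_eq_Icc (csInf_le_csSup hne hF.bddBelow hF.bddAbove)]
    exact segment_subset_convexHull (hF.sInf_mem hne) (hF.sSup_mem hne)

include hab hdis hset in
lemma endpoints_mem (hF : IsCompact F) (j : ℕ) : a j ∈ F ∧ b j ∈ F := by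
  have hne : F.Nonempty := F_nonempty hab hset
  have hcl : IsClosed (convexHull ℝ F) := by
    rw [convF_eq hF hne]; exact isClosed_Icc
  have hsub : Set.Ioo (a j) (b j) ⊆ convexHull ℝ F \ F :=
    hset ▸ Set.subset_iUnion (fun i => Set.Ioo (a i) (b i)) j
  have hIcc : Set.Icc (a j) (b j) ⊆ convexHull ℝ F := by
    rw [← closure_Ioo (hab j).1.ne]
    exact closure_minimal (fun x hx => (hsub hx).1) hcl
  constructor
  · by_contra ha
    have : a j ∈ (convexHull ℝ F) \ F := ⟨hIcc ⟨le_refl _, (hab j).1.le⟩, ha⟩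
    rw [hset, mem_iUnion] at this
    obtain ⟨i, hi⟩ := this
    have hij : i ≠ j := fun h => by subst h; exact lt_irrefl _ hi.1
    set x := (a j + min (b j) (b i))/2 with hx
    have hmin : a j < min (b j) (b i) := lt_min (hab j).1 hi.2
    have h1 : a j < x := by simp only [hx]; linarith
    have hxj : x ∈ Set.Ioo (a j) (b j) :=
      ⟨h1, by have := min_le_left (b j) (b i); simp only [hx]; linarith [(hab j).1]⟩
    have hxi : x ∈ Set.Ioo (a i) (b i) :=
      ⟨hi.1.trans h1, by have := min_le_right (b j) (b i); simp only [hx]; linarith [hi.2]⟩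
    exact Set.disjoint_left.1 (hdis hij) hxi hxj
  · by_contra hb
    have : b j ∈ (convexHull ℝ F) \ F := ⟨hIcc ⟨(hab j).1.le, le_refl _⟩, hb⟩
    rw [hset, mem_iUnion] at this
    obtain ⟨i, hi⟩ := this
    have hij : i ≠ j := fun h => by subst h; exact lt_irrefl _ hi.2
    set x := (max (a j) (a i) + b j)/2 with hx
    have hmax : max (a j) (a i) < b j := max_lt (hab j).1 hi.1
    have h1 : x < b j := by simp only [hx]; linarith
    have hxj : x ∈ Set.Ioo (a j) (b j) :=
      ⟨by simp only [hx]; linarith [le_max_left (a j) (a i)], h1⟩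
    have hxi : x ∈ Set.Ioo (a i) (b i) :=
      ⟨by simp only [hx]; linarith [le_max_right (a j) (a i)], h1.trans hi.2⟩
    exact Set.disjoint_left.1 (hdis hij) hxi hxj

include hset in
lemma gap_empty (j : ℕ) : ∀ y ∈ F, y ∉ Set.Ioo (a j) (b j) := by
  intro y hy hmem
  exact ((hset ▸ Set.subset_iUnion (fun i => Set.Ioo (a i) (b i)) j) hmem).2 hy

include hab hdis hset in
lemma sum_l_le (hF : IsCompact F) : ∃ B : ℝ, 0 < B ∧ ∀ S : Finset ℕ, ∑ j ∈ S, l j ≤ B := by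
  have hne : F.Nonempty := F_nonempty hab hset
  set R : ℝ := max (sSup F) 0 - min (sInf F) 0 + 1 with hR
  have hRsub : convexHull ℝ F ⊆ Set.Icc (min (sInf F) 0) (max (sSup F) 0) := by
    rw [convF_eq hF hne]
    exact Set.Icc_subset_Icc (min_le_left _ _) (le_max_left _ _)
  have hR0 : 0 < R := by
    have h1 : min (sInf F) 0 ≤ 0 := min_le_right _ _
    have h2 : (0:ℝ) ≤ max (sSup F) 0 := le_max_right _ _
    simp only [hR]; linarith
  refine ⟨R, hR0, fun S => ?_⟩
  have hvol : volume (⋃ j ∈ S, Set.Ioo (a j) (b j)) = ∑ j ∈ S, ENNReal.ofReal (l j) := by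
    rw [measure_biUnion_finset (fun i _ j _ hij => hdis hij) (fun j _ => measurableSet_Ioo)]
    exact Finset.sum_congr rfl fun j _ => by rw [Real.volume_Ioo, (hab j).2]
  have hsub : (⋃ j ∈ S, Set.Ioo (a j) (b j)) ⊆ Set.Icc (min (sInf F) 0) (max (sSup F) 0) :=
    Set.iUnion₂_subset fun j _ x hx =>
      hRsub ((hset ▸ Set.subset_iUnion (fun i => Set.Ioo (a i) (b i)) j) hx).1
  have hle := (hvol ▸ measure_mono hsub).trans_eq
    (Real.volume_Icc (a := min (sInf F) 0) (b := max (sSup F) 0))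
  rw [← ENNReal.ofReal_sum_of_nonneg (fun j _ => by linarith [(hab j).1, (hab j).2])] at hle
  have := (ENNReal.ofReal_le_ofReal_iff (by
      have h1 : min (sInf F) 0 ≤ 0 := min_le_right _ _
      have h2 : (0:ℝ) ≤ max (sSup F) 0 := le_max_right _ _
      linarith)).1 hle
  simp only [hR]; linarith

end

lemma mem_cthick_iff {F : Set ℝ} (hne : F.Nonempty) {r : ℝ} (hr : 0 ≤ r) (x : ℝ) :
    x ∈ cthickening r F ↔ infDist x F ≤ r := by
  rw [mem_cthickening_iff, infDist,
    ← ENNReal.le_ofReal_iff_toReal_le (infEdist_ne_top hne) hr]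

lemma le_infDist' {F : Set ℝ} (hne : F.Nonempty) {x c : ℝ}
    (h : ∀ y ∈ F, c ≤ dist x y) : c ≤ infDist x F := by
  by_contra hc
  rw [not_le, infDist_lt_iff hne] at hc
  obtain ⟨y, hy, hlt⟩ := hc
  exact absurd (h y hy) (not_le.2 hlt)

section
variable {F : Set ℝ} {l a b : ℕ → ℝ} {r : ℝ}
  (hne : F.Nonempty)
  (haF : ∀ j, a j ∈ F) (hbF : ∀ j, b j ∈ F)
  (hab : ∀ j, a j < b j ∧ b j - a j = l j)
  (hgap : ∀ j, ∀ y ∈ F, y ∉ Set.Ioo (a j) (b j))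

include hne haF hbF hab hgap in
lemma frontier_pts (hr : 0 < r) (j : ℕ) (h2r : 2*r < l j) :
    a j + r ∈ frontier (cthickening r F) ∧ b j - r ∈ frontier (cthickening r F) := by
  have hlj : b j - a j = l j := (hab j).2
  have hside : ∀ y ∈ F, y ≤ a j ∨ b j ≤ y := by
    intro y hy
    have := hgap j y hy
    simp only [Set.mem_Ioo, not_and_or, not_lt] at this
    tauto
  -- points strictly between a j + r and b j - r are not in the cthickening
  have hmid : ∀ x ∈ Set.Ioo (a j + r) (b j - r), x ∉ cthickening r F := by
    intro x hx
    rw [mem_cthick_iff hne hr.le, not_le]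
    have hx1 := hx.1; have hx2 := hx.2
    have hmin : min (x - a j) (b j - x) ≤ infDist x F := by
      apply le_infDist' hne
      intro y hy
      rw [Real.dist_eq]
      rcases hside y hy with h | h
      · calc min (x - a j) (b j - x) ≤ x - a j := min_le_left _ _
          _ ≤ x - y := by linarith
          _ ≤ |x - y| := le_abs_self _
      · calc min (x - a j) (b j - x) ≤ b j - x := min_le_right _ _
          _ ≤ y - x := by linarith
          _ ≤ |x - y| := by rw [abs_sub_comm]; exact le_abs_self _
    have h2 : r < min (x - a j) (b j - x) := lt_min (by linarith) (by linarith)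
    linarith [min_le_left (x - a j) (b j - x)]
  have hIoo_ne : a j + r < b j - r := by linarith
  have hclos : Set.Icc (a j + r) (b j - r) ⊆ closure (cthickening r F)ᶜ := by
    rw [← closure_Ioo hIoo_ne.ne]
    exact closure_mono (fun x hx => hmid x hx)
  rw [frontier_eq_closure_inter_closure, (isClosed_cthickening).closure_eq]
  constructor
  · refine ⟨?_, hclos ⟨le_refl _, by linarith⟩⟩
    rw [mem_cthick_iff hne hr.le]
    calc infDist (a j + r) F ≤ dist (a j + r) (a j) := infDist_le_dist_of_mem (haF j)
      _ = r := by rw [Real.dist_eq, add_sub_cancel_left]; exact abs_of_nonneg hr.le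
  · refine ⟨?_, hclos ⟨by linarith, le_refl _⟩⟩
    rw [mem_cthick_iff hne hr.le]
    calc infDist (b j - r) F ≤ dist (b j - r) (b j) := infDist_le_dist_of_mem (hbF j)
      _ = r := by rw [Real.dist_eq, sub_sub_cancel_left, abs_neg]; exact abs_of_nonneg hr.le

end

lemma hzero_finset_eq (S : Finset ℝ) : μH[(0:ℝ)] (↑S : Set ℝ) = S.card := by
  have h : (↑S : Set ℝ) = ⋃ x ∈ S, {x} := by ext y; simp
  rw [h, measure_biUnion_finset (fun x _ y _ hxy => by simpa using hxy)
    (fun b _ => measurableSet_singleton b)]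
  simp [MeasureTheory.Measure.hausdorffMeasure_zero_singleton]

section
variable {F : Set ℝ} {l a b : ℕ → ℝ} {r : ℝ}
  (hne : F.Nonempty)
  (haF : ∀ j, a j ∈ F) (hbF : ∀ j, b j ∈ F)
  (hab : ∀ j, a j < b j ∧ b j - a j = l j)
  (hgap : ∀ j, ∀ y ∈ F, y ∉ Set.Ioo (a j) (b j))
  (hdis : Pairwise (Function.onFun Disjoint fun j => Set.Ioo (a j) (b j)))

include hab in
lemma pts_mem_Ioo (hr : 0 < r) {j : ℕ} (h : 2*r < l j) :
    a j + r ∈ Set.Ioo (a j) (b j) ∧ b j - r ∈ Set.Ioo (a j) (b j) := by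
  have h1 := (hab j).1; have h2 := (hab j).2
  exact ⟨⟨by linarith, by linarith⟩, ⟨by linarith, by linarith⟩⟩

include hne haF hbF hab hgap hdis in
lemma lower_card (hr : 0 < r) (hmono : Antitone l) (n : ℕ) (h2r : 2*r < l n) :
    ((2*(n+1) : ℕ) : ℝ≥0∞) ≤ μH[(0:ℝ)] (frontier (cthickening r F)) := by
  classical
  set S : Finset ℝ := (Finset.range (n+1)).biUnion (fun j => {a j + r, b j - r}) with hS
  have hjr : ∀ j, j ∈ Finset.range (n+1) → 2*r < l j := fun j hj =>
    lt_of_lt_of_le h2r (hmono (Nat.lt_succ_iff.1 (Finset.mem_range.1 hj)))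
  have hmemIoo : ∀ j, j ∈ Finset.range (n+1) → ∀ x : ℝ,
      x ∈ ({a j + r, b j - r} : Finset ℝ) → x ∈ Set.Ioo (a j) (b j) := by
    intro j hj x hx
    rcases Finset.mem_insert.1 hx with h | h
    · exact h ▸ (pts_mem_Ioo hab hr (hjr j hj)).1
    · exact (Finset.mem_singleton.1 h) ▸ (pts_mem_Ioo hab hr (hjr j hj)).2
  have hcard : S.card = 2*(n+1) := by
    rw [hS, Finset.card_biUnion]
    · have : ∀ j ∈ Finset.range (n+1), ({a j + r, b j - r} : Finset ℝ).card = 2 := by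
        intro j hj
        rw [Finset.card_insert_of_notMem (by
          simp only [Finset.mem_singleton]
          have := hjr j hj; intro h; linarith [(hab j).2]), Finset.card_singleton]
      rw [Finset.sum_congr rfl this, Finset.sum_const, Finset.card_range, smul_eq_mul]
      ring
    · intro i hi j hj hij
      rw [Function.onFun, Finset.disjoint_left]
      intro x hxi hxj
      exact Set.disjoint_left.1 (hdis hij) (hmemIoo i hi x hxi) (hmemIoo j hj x hxj)
  have hsub : (↑S : Set ℝ) ⊆ frontier (cthickening r F) := by
    intro x hx
    rw [hS] at hx
    simp only [Finset.coe_biUnion, Finset.mem_coe, Set.mem_iUnion] at hx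
    obtain ⟨j, hj, hxj⟩ := hx
    rcases Finset.mem_insert.1 hxj with h | h
    · exact h ▸ (frontier_pts hne haF hbF hab hgap hr j (hjr j hj)).1
    · exact (Finset.mem_singleton.1 h) ▸ (frontier_pts hne haF hbF hab hgap hr j (hjr j hj)).2
  calc ((2*(n+1) : ℕ) : ℝ≥0∞) = (S.card : ℝ≥0∞) := by rw [hcard]
    _ = μH[(0:ℝ)] (↑S : Set ℝ) := (hzero_finset_eq S).symm
    _ ≤ μH[(0:ℝ)] (frontier (cthickening r F)) := measure_mono hsub

end

section
variable {F : Set ℝ} {l a b : ℕ → ℝ} {r : ℝ}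
  (hne : F.Nonempty)
  (haF : ∀ j, a j ∈ F) (hbF : ∀ j, b j ∈ F)
  (hab : ∀ j, a j < b j ∧ b j - a j = l j)
  (hgap : ∀ j, ∀ y ∈ F, y ∉ Set.Ioo (a j) (b j))
  (hset : (convexHull ℝ F) \ F = ⋃ j, Set.Ioo (a j) (b j))

include hne haF hbF hab hgap hset in
lemma upper_card (hF : IsCompact F) (hr : 0 < r) (hfin : {j | 2*r ≤ l j}.Finite) :
    μH[(0:ℝ)] (frontier (cthickening r F)) ≤ ((2 + 2 * hfin.toFinset.card : ℕ) : ℝ≥0∞) := by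
  classical
  set T := hfin.toFinset with hT
  set S : Finset ℝ :=
    insert (sInf F - r) (insert (sSup F + r) (T.biUnion fun j => {a j + r, b j - r})) with hS
  have hsub : frontier (cthickening r F) ⊆ (↑S : Set ℝ) := by
    intro x hx
    have hinf : infDist x F = r := by
      have h := Metric.frontier_cthickening_subset F hx
      rw [infDist, h, ENNReal.toReal_ofReal hr.le]
    have hxF : x ∉ F := fun h => by
      rw [infDist_zero_of_mem h] at hinf; linarith
    obtain ⟨y, hyF, hyd⟩ := hF.exists_infDist_eq_dist hne x
    rw [hinf] at hyd
    have hxy : x ≠ y := fun h => by rw [h, dist_self] at hyd; linarith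
    have hconv := convF_eq hF hne
    have hmemS : ∀ z : ℝ, z = sInf F - r ∨ z = sSup F + r ∨
        (∃ j ∈ T, z = a j + r ∨ z = b j - r) → z ∈ (↑S : Set ℝ) := by
      intro z hz
      simp only [hS, Finset.coe_insert, Set.mem_insert_iff, Finset.coe_biUnion,
        Finset.mem_coe, Set.mem_iUnion, Finset.mem_insert, Finset.mem_singleton]
      rcases hz with h | h | ⟨j, hj, h⟩
      · exact Or.inl h
      · exact Or.inr (Or.inl h)
      · exact Or.inr (Or.inr ⟨j, hj, h⟩)
    apply hmemS
    rcases lt_or_gt_of_ne hxy with hlt | hgt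
    · -- x < y
      have hyd' : y - x = r := by
        rw [Real.dist_eq, abs_of_nonpos (by linarith)] at hyd; linarith
      by_cases hz : ∃ z ∈ F, z ≤ x
      · obtain ⟨z, hzF, hzx⟩ := hz
        have hxconv : x ∈ convexHull ℝ F := by
          rw [hconv]
          exact ⟨(csInf_le hF.bddBelow hzF).trans hzx,
            hlt.le.trans (le_csSup hF.bddAbove hyF)⟩
        have hxu : x ∈ ⋃ j, Set.Ioo (a j) (b j) := hset ▸ ⟨hxconv, hxF⟩
        obtain ⟨j, hj⟩ := Set.mem_iUnion.1 hxu
        have hbj : b j ≤ y := by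
          by_contra hby; push_neg at hby
          exact hgap j y hyF ⟨hj.1.trans hlt, hby⟩
        have h1 : r ≤ b j - x := by
          have h := infDist_le_dist_of_mem (x := x) (hbF j)
          rw [hinf, Real.dist_eq, abs_of_nonpos (by linarith [hj.2])] at h
          linarith
        have h3 : r ≤ x - a j := by
          have h := infDist_le_dist_of_mem (x := x) (haF j)
          rw [hinf, Real.dist_eq, abs_of_nonneg (by linarith [hj.1])] at h
          linarith
        have hjT : j ∈ T := by
          rw [hT, Set.Finite.mem_toFinset]
          have := (hab j).2
          show 2*r ≤ l j
          linarith
        exact Or.inr (Or.inr ⟨j, hjT, Or.inr (by linarith)⟩)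
      · push_neg at hz
        have hsf : sInf F ∈ F := hF.sInf_mem hne
        have h1 : r ≤ sInf F - x := by
          have h := infDist_le_dist_of_mem (x := x) hsf
          rw [hinf, Real.dist_eq, abs_of_nonpos (by linarith [hz (sInf F) hsf])] at h
          linarith
        have h2 : sInf F ≤ y := csInf_le hF.bddBelow hyF
        exact Or.inl (by linarith)
    · -- y < x
      have hyd' : x - y = r := by
        rw [Real.dist_eq, abs_of_nonneg (by linarith)] at hyd; linarith
      by_cases hz : ∃ z ∈ F, x ≤ z
      · obtain ⟨z, hzF, hzx⟩ := hz
        have hxconv : x ∈ convexHull ℝ F := by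
          rw [hconv]
          exact ⟨(csInf_le hF.bddBelow hyF).trans hgt.le,
            hzx.trans (le_csSup hF.bddAbove hzF)⟩
        have hxu : x ∈ ⋃ j, Set.Ioo (a j) (b j) := hset ▸ ⟨hxconv, hxF⟩
        obtain ⟨j, hj⟩ := Set.mem_iUnion.1 hxu
        have haj : y ≤ a j := by
          by_contra hay; push_neg at hay
          exact hgap j y hyF ⟨hay, hgt.trans hj.2⟩
        have h1 : r ≤ x - a j := by
          have h := infDist_le_dist_of_mem (x := x) (haF j)
          rw [hinf, Real.dist_eq, abs_of_nonneg (by linarith [hj.1])] at h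
          linarith
        have h3 : r ≤ b j - x := by
          have h := infDist_le_dist_of_mem (x := x) (hbF j)
          rw [hinf, Real.dist_eq, abs_of_nonpos (by linarith [hj.2])] at h
          linarith
        have hjT : j ∈ T := by
          rw [hT, Set.Finite.mem_toFinset]
          have := (hab j).2
          show 2*r ≤ l j
          linarith
        exact Or.inr (Or.inr ⟨j, hjT, Or.inl (by linarith)⟩)
      · push_neg at hz
        have hsf : sSup F ∈ F := hF.sSup_mem hne
        have h1 : r ≤ x - sSup F := by
          have h := infDist_le_dist_of_mem (x := x) hsf
          rw [hinf, Real.dist_eq, abs_of_nonneg (by linarith [hz (sSup F) hsf])] at h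
          linarith
        have h2 : y ≤ sSup F := le_csSup hF.bddAbove hyF
        exact Or.inr (Or.inl (by linarith))
  calc μH[(0:ℝ)] (frontier (cthickening r F)) ≤ μH[(0:ℝ)] (↑S : Set ℝ) := measure_mono hsub
    _ = S.card := hzero_finset_eq S
    _ ≤ ((2 + 2 * T.card : ℕ) : ℝ≥0∞) := by
      have : S.card ≤ 2 + 2 * T.card := by
        have hb : (T.biUnion fun j => ({a j + r, b j - r} : Finset ℝ)).card ≤ 2 * T.card := by
          calc (T.biUnion fun j => ({a j + r, b j - r} : Finset ℝ)).card
              ≤ ∑ j ∈ T, ({a j + r, b j - r} : Finset ℝ).card := Finset.card_biUnion_le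
            _ ≤ ∑ _j ∈ T, 2 := Finset.sum_le_sum fun j _ =>
                (Finset.card_insert_le _ _).trans (by simp)
            _ = 2 * T.card := by rw [Finset.sum_const, smul_eq_mul, mul_comm]
        calc S.card ≤ (insert (sSup F + r) (T.biUnion fun j => ({a j + r, b j - r} : Finset ℝ))).card + 1 :=
              Finset.card_insert_le _ _
          _ ≤ ((T.biUnion fun j => ({a j + r, b j - r} : Finset ℝ)).card + 1) + 1 := by
              linarith [Finset.card_insert_le (sSup F + r) (T.biUnion fun j => ({a j + r, b j - r} : Finset ℝ))]
          _ ≤ 2 + 2 * T.card := by omega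
      exact_mod_cast this

end

lemma l_decay {l : ℕ → ℝ} {B : ℝ} (hmono : Antitone l) (hpos : ∀ j, 0 < l j)
    (hsum : ∀ S : Finset ℕ, ∑ j ∈ S, l j ≤ B) (n : ℕ) : l n ≤ B / (n+1) := by
  have h1 : ((n+1) : ℝ) * l n ≤ ∑ j ∈ Finset.range (n+1), l j := by
    have := Finset.card_nsmul_le_sum (Finset.range (n+1)) l (l n)
      (fun x hx => hmono (Nat.lt_succ_iff.1 (Finset.mem_range.1 hx)))
    rw [Finset.card_range, nsmul_eq_mul] at this
    exact_mod_cast this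
  have h2 := hsum (Finset.range (n+1))
  have h3 : (0:ℝ) < (n:ℝ) + 1 := by positivity
  rw [le_div_iff₀ h3]
  nlinarith

lemma fin_ge {l : ℕ → ℝ} {B : ℝ} (hB : 0 < B) (hmono : Antitone l) (hpos : ∀ j, 0 < l j)
    (hsum : ∀ S : Finset ℕ, ∑ j ∈ S, l j ≤ B) {ε : ℝ} (hε : 0 < ε) :
    {j : ℕ | ε ≤ l j}.Finite := by
  apply Set.Finite.subset (Set.finite_Iio (Nat.ceil (B/ε)))
  intro j hj
  have h1 : l j ≤ B / (j+1) := l_decay hmono hpos hsum j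
  have h2 : ε ≤ B / ((j:ℝ)+1) := le_trans hj h1
  have h3 : (0:ℝ) < (j:ℝ) + 1 := by positivity
  have h4 : ε * ((j:ℝ)+1) ≤ B := by
    rw [le_div_iff₀ h3] at h2
    linarith
  simp only [Set.mem_Iio]
  rw [Nat.lt_ceil, lt_div_iff₀ hε]
  nlinarith


theorem string_bounds_of_scontent_two_sided (F : Set ℝ) (hF : IsCompact F)
    (hF0 : volume F = 0) (l : ℕ → ℝ) (hl : IsFractalString F l)
    (D : ℝ) (hD : D ∈ Set.Ioo (0 : ℝ) 1)
    (h1 : 0 < lowerSContent F D) (h2 : upperSContent F D < ⊤) :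
    0 < Filter.liminf (fun j : ℕ => ((l j * (j : ℝ) ^ (1 / D) : ℝ) : EReal)) Filter.atTop ∧
      Filter.limsup (fun j : ℕ => ((l j * (j : ℝ) ^ (1 / D) : ℝ) : EReal)) Filter.atTop < ⊤ := by
  classical
  unfold lowerSContent at h1
  unfold upperSContent at h2
  
  obtain ⟨hmono, hpos, a, b, hdis, hab, hset⟩ := hl
  obtain ⟨hD0, hD1⟩ := hD
  have hDne : D ≠ 0 := ne_of_gt hD0
  have hne : F.Nonempty := F_nonempty hab hset
  have haF : ∀ j, a j ∈ F := fun j => (endpoints_mem hab hdis hset hF j).1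
  have hbF : ∀ j, b j ∈ F := fun j => (endpoints_mem hab hdis hset hF j).2
  have hgap : ∀ j, ∀ y ∈ F, y ∉ Set.Ioo (a j) (b j) := fun j => gap_empty hset j
  obtain ⟨B, hB0, hBsum⟩ := sum_l_le hab hdis hset hF
  set c0 : ℝ := (1 - D) * kappa (1 - D) with hc0def
  have hkpos : 0 < kappa (1 - D) := by
    apply div_pos (Real.rpow_pos_of_pos Real.pi_pos _)
    apply Real.Gamma_pos_of_pos
    linarith
  have hc0 : 0 < c0 := mul_pos (by linarith) hkpos
  have hgpos : ∀ r : ℝ, 0 < r → 0 < c0 * r ^ (-D) :=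
    fun r hr => mul_pos hc0 (Real.rpow_pos_of_pos hr _)
  have hg0 : ∀ r : ℝ, 0 < r → ENNReal.ofReal (c0 * r ^ (-D)) ≠ 0 :=
    fun r hr => (ENNReal.ofReal_pos.2 (hgpos r hr)).ne'
  have hgtop : ∀ r : ℝ, ENNReal.ofReal (c0 * r ^ (-D)) ≠ ⊤ := fun r => ENNReal.ofReal_ne_top
  have hfin2r : ∀ r : ℝ, 0 < r → {j : ℕ | 2*r ≤ l j}.Finite :=
    fun r hr => fin_ge hB0 hmono hpos hBsum (by linarith)
  have hDinv : D * (1/D) = 1 := by field_simp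
  constructor
  · -- liminf part
    set L := Filter.liminf
      (fun r : ℝ => μH[(0 : ℝ)] (frontier (cthickening r F)) /
        ENNReal.ofReal ((1 - D) * kappa (1 - D) * r ^ (-D))) (𝓝[>] (0 : ℝ)) with hL
    set m : ℝ≥0∞ := min L 1 with hm
    have hm0 : m ≠ 0 := by
      simp only [hm, ne_eq, min_eq_iff]
      intro h
      rcases h with ⟨h, _⟩ | ⟨h, _⟩
      · exact h1.ne' h
      · exact one_ne_zero h
    have hmtop : m ≠ ⊤ := by
      simp only [hm]
      exact ne_top_of_le_ne_top one_ne_top (min_le_right _ _)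
    set c : ℝ≥0∞ := m / 2 with hc
    have hcm : c < m := ENNReal.half_lt_self hm0 hmtop
    have hc0' : c ≠ 0 := by
      simp only [hc]
      exact (ENNReal.div_pos hm0 (by norm_num)).ne'
    have hctop : c ≠ ⊤ := ne_top_of_le_ne_top hmtop (by simp [hc, ENNReal.half_le_self])
    have hclt : c < L := lt_of_lt_of_le hcm (min_le_left _ _)
    have hlo := eventually_lt_of_lt_liminf hclt
    obtain ⟨δ, hδmem, hδ⟩ := mem_nhdsGT_iff_exists_Ioo_subset.1 hlo
    have hδ0 : (0:ℝ) < δ := hδmem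
    set c' : ℝ := c.toReal with hc'
    have hc'pos : 0 < c' := ENNReal.toReal_pos hc0' hctop
    have key2 : ∀ r : ℝ, ∀ hr : r ∈ Set.Ioo 0 δ,
        c' * (c0 * r ^ (-D)) ≤ 2 + 2*(((hfin2r r hr.1).toFinset.card : ℝ)) := by
      intro r hr
      have hflt := hδ hr
      have hmul : c * ENNReal.ofReal (c0 * r ^ (-D)) ≤
          μH[(0 : ℝ)] (frontier (cthickening r F)) := by
        have := (ENNReal.le_div_iff_mul_le (Or.inl (hg0 r hr.1)) (Or.inl (hgtop r))).1
          (le_of_lt hflt)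
        exact this
      have hupper := upper_card hne haF hbF hab hgap hset hF hr.1 (hfin2r r hr.1)
      have hcomb := hmul.trans hupper
      rw [show c = ENNReal.ofReal c' from (ENNReal.ofReal_toReal hctop).symm,
        ← ENNReal.ofReal_mul (ENNReal.toReal_nonneg),
        show ((2 + 2 * (hfin2r r hr.1).toFinset.card : ℕ) : ℝ≥0∞)
          = ENNReal.ofReal ((2 + 2 * (hfin2r r hr.1).toFinset.card : ℕ) : ℝ) from
          (ENNReal.ofReal_natCast _).symm] at hcomb
      have := (ENNReal.ofReal_le_ofReal_iff (by positivity)).1 hcomb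
      push_cast at this ⊢
      linarith
    set ε0 : ℝ := 2 * (c'*c0/8) ^ (1/D) with hε0
    have hε0pos : 0 < ε0 := by
      have : (0:ℝ) < c'*c0/8 := by positivity
      positivity
    have hev : ∀ᶠ j : ℕ in atTop, (ε0 : EReal) ≤ ((l j * (j:ℝ) ^ (1/D) : ℝ) : EReal) := by
      rw [Filter.eventually_atTop]
      refine ⟨max 1 (Nat.ceil (c'*c0/(4*δ^D))), fun j hj => ?_⟩
      have hj1 : 1 ≤ j := le_trans (le_max_left _ _) hj
      have hjc : (c'*c0/(4*δ^D)) ≤ (j:ℝ) := by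
        calc c'*c0/(4*δ^D) ≤ (Nat.ceil (c'*c0/(4*δ^D)) : ℝ) := Nat.le_ceil _
          _ ≤ (j:ℝ) := by exact_mod_cast le_trans (le_max_right _ _) hj
      have hjR : (1:ℝ) ≤ (j:ℝ) := by exact_mod_cast hj1
      set β : ℝ := c'*c0/(4*((j:ℝ)+1)) with hβ
      have hβpos : 0 < β := by positivity
      have hδD : 0 < δ ^ D := Real.rpow_pos_of_pos hδ0 _
      have hβδ : β < δ ^ D := by
        rw [hβ, div_lt_iff₀ (by positivity)]
        have h4 : c'*c0/(4*δ^D) < (j:ℝ) + 1 := by linarith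
        rw [div_lt_iff₀ (by positivity)] at h4
        nlinarith
      set r : ℝ := β ^ (1/D) with hrdef
      have hrpos : 0 < r := Real.rpow_pos_of_pos hβpos _
      have hrδ : r < δ := by
        have h5 : β ^ (1/D) < (δ^D) ^ (1/D) :=
          Real.rpow_lt_rpow hβpos.le hβδ (by positivity)
        have h6 : (δ^D) ^ (1/D) = δ := by
          rw [← Real.rpow_mul hδ0.le, hDinv, Real.rpow_one]
        rw [hrdef]; rw [h6] at h5; exact h5
      have hrD : r ^ (-D) = β⁻¹ := by
        rw [hrdef, ← Real.rpow_mul hβpos.le,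
          show (1/D)*(-D) = -1 by field_simp, Real.rpow_neg_one]
      have hval : c' * (c0 * r ^ (-D)) = 4*((j:ℝ)+1) := by
        rw [hrD, hβ]
        field_simp
      have hkey := key2 r ⟨hrpos, hrδ⟩
      rw [hval] at hkey
      set N := (hfin2r r hrpos).toFinset.card with hN
      have hjN : j < N := by
        have : (j:ℝ) < (N:ℝ) := by linarith
        exact_mod_cast this
      have hjmem : 2*r ≤ l j := by
        by_contra hcon
        push_neg at hcon
        have hsubr : (hfin2r r hrpos).toFinset ⊆ Finset.range j := by
          intro i hi
          rw [Set.Finite.mem_toFinset] at hi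
          rw [Finset.mem_range]
          by_contra hij
          push_neg at hij
          have := hmono hij
          simp only [Set.mem_setOf_eq] at hi
          linarith
        have := Finset.card_le_card hsubr
        rw [Finset.card_range] at this
        omega
      -- now the lower bound
      have hββ : c'*c0/(8*(j:ℝ)) ≤ β := by
        rw [hβ]
        apply div_le_div_of_nonneg_left (by positivity) (by positivity)
        linarith
      have hr8 : (c'*c0/(8*(j:ℝ))) ^ (1/D) ≤ r := by
        rw [hrdef]
        exact Real.rpow_le_rpow (by positivity) hββ (by positivity)
      have hprod : (c'*c0/(8*(j:ℝ))) ^ (1/D) * (j:ℝ) ^ (1/D) = (c'*c0/8) ^ (1/D) := by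
        rw [← Real.mul_rpow (by positivity) (by positivity)]
        congr 1
        field_simp
      have hfinal : ε0 ≤ l j * (j:ℝ) ^ (1/D) := by
        have hjrp : (0:ℝ) ≤ (j:ℝ) ^ (1/D) := Real.rpow_nonneg (by positivity) _
        calc ε0 = 2 * ((c'*c0/8) ^ (1/D)) := hε0
          _ = 2 * ((c'*c0/(8*(j:ℝ))) ^ (1/D) * (j:ℝ) ^ (1/D)) := by rw [hprod]
          _ ≤ 2 * (r * (j:ℝ) ^ (1/D)) := by
              have := mul_le_mul_of_nonneg_right hr8 hjrp
              linarith
          _ = (2*r) * (j:ℝ) ^ (1/D) := by ring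
          _ ≤ l j * (j:ℝ) ^ (1/D) := mul_le_mul_of_nonneg_right hjmem hjrp
      exact_mod_cast hfinal
    have hliminf := le_liminf_of_le (by isBoundedDefault) hev
    calc (0:EReal) < (ε0 : EReal) := by exact_mod_cast hε0pos
      _ ≤ _ := hliminf
  · -- limsup part
    have hup := eventually_lt_of_limsup_lt (ENNReal.lt_add_right h2.ne one_ne_zero)
    obtain ⟨δ, hδmem, hδ⟩ := mem_nhdsGT_iff_exists_Ioo_subset.1 hup
    have hδ0 : (0:ℝ) < δ := hδmem
    set Ktot : ℝ≥0∞ := Filter.limsup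
      (fun r : ℝ => μH[(0 : ℝ)] (frontier (cthickening r F)) /
        ENNReal.ofReal (c0 * r ^ (-D))) (𝓝[>] (0 : ℝ)) + 1 with hKtot
    have hKtop : Ktot ≠ ⊤ := ENNReal.add_ne_top.2 ⟨h2.ne, one_ne_top⟩
    set K' : ℝ := Ktot.toReal with hK'
    have hK'0 : 0 ≤ K' := ENNReal.toReal_nonneg
    set C2 : ℝ := K' * c0 * 4 ^ D with hC2def
    have hC2 : 0 ≤ C2 := by
      have h4D : (0:ℝ) ≤ 4 ^ D := (Real.rpow_pos_of_pos (by norm_num) D).le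
      positivity
    have key : ∀ j : ℕ, l j < 4*δ → 2*((j:ℝ)+1) * (l j) ^ D ≤ C2 := by
      intro j hjδ
      set r : ℝ := l j / 4 with hrdef
      have hr : 0 < r := by have := hpos j; simp only [hrdef]; linarith
      have hr2 : 2*r < l j := by have := hpos j; simp only [hrdef]; linarith
      have hlow := lower_card hne haF hbF hab hgap hdis hr hmono j hr2
      have hflt := hδ ⟨hr, by simp only [hrdef]; linarith⟩
      have hμ := (ENNReal.div_lt_iff (Or.inl (hg0 r hr)) (Or.inl (hgtop r))).1 hflt
      have hcomb : ((2*(j+1) : ℕ) : ℝ≥0∞) ≤ Ktot * ENNReal.ofReal (c0 * r ^ (-D)) :=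
        hlow.trans hμ.le
      rw [show Ktot = ENNReal.ofReal K' from (ENNReal.ofReal_toReal hKtop).symm,
        ← ENNReal.ofReal_mul hK'0,
        show ((2*(j+1) : ℕ) : ℝ≥0∞) = ENNReal.ofReal ((2*(j+1) : ℕ) : ℝ) from
          (ENNReal.ofReal_natCast _).symm] at hcomb
      have hreal : ((2*(j+1) : ℕ) : ℝ) ≤ K' * (c0 * r ^ (-D)) := by
        refine (ENNReal.ofReal_le_ofReal_iff ?_).1 hcomb
        have := hgpos r hr
        positivity
      have hrD : r ^ (-D) = (l j) ^ (-D) * 4 ^ D := by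
        rw [hrdef, Real.div_rpow (hpos j).le (by norm_num : (0:ℝ) ≤ 4),
          Real.rpow_neg (by norm_num : (0:ℝ) ≤ 4), div_inv_eq_mul]
      rw [hrD] at hreal
      have hX : (0:ℝ) < (l j) ^ D := Real.rpow_pos_of_pos (hpos j) D
      have hcancel : (l j) ^ (-D) * (l j) ^ D = 1 := by
        rw [← Real.rpow_add (hpos j)]; norm_num
      have h5 := mul_le_mul_of_nonneg_right hreal hX.le
      have h6 : K' * (c0 * ((l j) ^ (-D) * 4 ^ D)) * (l j) ^ D = C2 := by
        have h7 : K' * (c0 * ((l j) ^ (-D) * 4 ^ D)) * (l j) ^ D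
            = K' * c0 * 4 ^ D * ((l j) ^ (-D) * (l j) ^ D) := by ring
        rw [h7, hcancel, mul_one, hC2def]
      rw [h6] at h5
      push_cast at h5
      linarith
    have hevU : ∀ᶠ j : ℕ in atTop,
        ((l j * (j:ℝ) ^ (1/D) : ℝ) : EReal) ≤ ((C2 ^ (1/D) : ℝ) : EReal) := by
      rw [Filter.eventually_atTop]
      refine ⟨Nat.ceil (B/δ), fun j hj => ?_⟩
      have hjB : B/δ ≤ (j:ℝ) := le_trans (Nat.le_ceil _) (by exact_mod_cast hj)
      have hjδ : l j < 4*δ := by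
        have h1' : l j ≤ B / ((j:ℝ)+1) := l_decay hmono hpos hBsum j
        have h2' : B / ((j:ℝ)+1) < δ := by
          rw [div_lt_iff₀ (by positivity)]
          rw [div_le_iff₀ hδ0] at hjB
          nlinarith
        linarith
      have hKey := key j hjδ
      set X : ℝ := (l j) ^ D with hXdef
      have hX0 : 0 < X := Real.rpow_pos_of_pos (hpos j) D
      have hXj : X * (j:ℝ) ≤ C2 := by nlinarith [Nat.cast_nonneg (α := ℝ) j]
      have heq : l j * (j:ℝ) ^ (1/D) = (X * (j:ℝ)) ^ (1/D) := by
        rw [Real.mul_rpow hX0.le (Nat.cast_nonneg j), hXdef,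
          ← Real.rpow_mul (hpos j).le, hDinv, Real.rpow_one]
      have hle : (X * (j:ℝ)) ^ (1/D) ≤ C2 ^ (1/D) :=
        Real.rpow_le_rpow (by positivity) hXj (by positivity)
      rw [heq] at *
      exact_mod_cast hle
    have hlimsup := limsup_le_of_le (by isBoundedDefault) hevU
    exact lt_of_le_of_lt hlimsup (EReal.coe_lt_top _)
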